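/- Let R be a commutative unital complex semisimple Banach algebra and A ∈ R^{n×n}. Then there exist constants C > 0 and ε > 0 with ‖e^{tA}‖ ≤ C e^{−εt} for all t ≥ 0 if and only if sup{Re λ : λ is an eigenvalue of Â(φ) for some φ ∈ M(R)} < 0. -/

import Mathlib

attribute [local instance] Matrix.linftyOpNormedRing Matrix.linftyOpNormedAlgebra

open NormedSpace
open scoped ENNReal NNReal

namespace ExpStableAux

variable {N : ℕ}


lemma pow_mulVec_eigen (B : Matrix (Fin N) (Fin N) ℂ) {v : Fin N → ℂ} {μ : ℂ}
    (h : B.mulVec v = μ • v) (k : ℕ) : (B ^ k).mulVec v = μ ^ k • v := by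
  induction k with
  | zero => simp [Matrix.one_mulVec]
  | succ k ih =>
      rw [pow_succ, ← Matrix.mulVec_mulVec, h, Matrix.mulVec_smul, ih, smul_smul, pow_succ]
      ring_nf

lemma exp_mulVec_eigen (B : Matrix (Fin N) (Fin N) ℂ) {v : Fin N → ℂ} {μ : ℂ}
    (h : B.mulVec v = μ • v) : (exp B).mulVec v = Complex.exp μ • v := by
  let L : Matrix (Fin N) (Fin N) ℂ →ₗ[ℂ] (Fin N → ℂ) :=
    { toFun := fun M => M.mulVec v
      map_add' := fun M M' => Matrix.add_mulVec M M' v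
      map_smul' := fun c M => Matrix.smul_mulVec c M v }
  let Lc : Matrix (Fin N) (Fin N) ℂ →L[ℂ] (Fin N → ℂ) :=
    L.mkContinuous ‖v‖ (fun M => by
      simpa [L, mul_comm] using Matrix.linfty_opNorm_mulVec M v)
  have hexpB : HasSum (fun k : ℕ => ((k.factorial : ℂ))⁻¹ • B ^ k) (exp B) := by
    rw [exp_eq_tsum ℂ]
    exact (expSeries_summable' (𝕂 := ℂ) B).hasSum
  have h1 := hexpB.mapL Lc
  have h1' : HasSum (fun k : ℕ => (((k.factorial : ℂ))⁻¹ * μ ^ k) • v) ((exp B).mulVec v) := by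
    refine h1.congr_fun fun k => ?_
    have hLc : Lc (((k.factorial : ℂ))⁻¹ • B ^ k)
        = ((k.factorial : ℂ))⁻¹ • (B ^ k).mulVec v := by rw [map_smul]; rfl
    rw [hLc, pow_mulVec_eigen B h k, smul_smul]
  have hexpμ : HasSum (fun k : ℕ => ((k.factorial : ℂ))⁻¹ • μ ^ k) (exp μ) := by
    rw [exp_eq_tsum ℂ]
    exact (expSeries_summable' (𝕂 := ℂ) μ).hasSum
  have h2 := hexpμ.mapL ((1 : ℂ →L[ℂ] ℂ).smulRight v)
  have h2' : HasSum (fun k : ℕ => (((k.factorial : ℂ))⁻¹ * μ ^ k) • v) (Complex.exp μ • v) := by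
    rw [Complex.exp_eq_exp_ℂ]
    refine h2.congr_fun fun k => ?_
    simp [smul_smul]
  exact h1'.unique h2'

lemma exists_eigen_exp (B : Matrix (Fin N) (Fin N) ℂ) {z : ℂ}
    (hz : (z • (1 : Matrix (Fin N) (Fin N) ℂ) - exp B).det = 0) :
    ∃ μ : ℂ, (μ • (1 : Matrix (Fin N) (Fin N) ℂ) - B).det = 0 ∧ z = Complex.exp μ := by
  classical
  obtain ⟨v, hv0, hv⟩ := (Matrix.exists_mulVec_eq_zero_iff).mpr hz
  have hvE : (exp B).mulVec v = z • v := by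
    rw [Matrix.sub_mulVec, Matrix.smul_mulVec, Matrix.one_mulVec, sub_eq_zero] at hv
    exact hv.symm
  set K := LinearMap.ker ((exp B).mulVecLin - z • LinearMap.id) with hKdef
  have hmemK : ∀ w, w ∈ K ↔ (exp B).mulVec w = z • w := by
    intro w
    simp [hKdef, LinearMap.mem_ker, sub_eq_zero, Matrix.mulVecLin_apply, LinearMap.sub_apply,
      LinearMap.smul_apply, LinearMap.id_apply]
  have hBK : ∀ w ∈ K, (Matrix.mulVecLin B) w ∈ K := by
    intro w hw
    rw [hmemK] at hw ⊢
    have hcomm : exp B * B = B * exp B := ((Commute.refl B).exp_left).eq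
    rw [Matrix.mulVecLin_apply, Matrix.mulVec_mulVec, hcomm, ← Matrix.mulVec_mulVec, hw,
      Matrix.mulVec_smul]
  haveI : Nontrivial K := by
    refine nontrivial_of_ne ⟨v, (hmemK v).mpr hvE⟩ 0 ?_
    simpa [Submodule.mk_eq_zero] using hv0
  let f : Module.End ℂ K := (Matrix.mulVecLin B).restrict hBK
  obtain ⟨μ, hμ⟩ := Module.End.exists_eigenvalue f
  obtain ⟨w, hw⟩ := hμ.exists_hasEigenvector
  have hw0 : (w : Fin N → ℂ) ≠ 0 := fun h => hw.2 (Subtype.ext h)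
  have hBw : B.mulVec (w : Fin N → ℂ) = μ • (w : Fin N → ℂ) := by
    have h4 : ((f w : K) : Fin N → ℂ) = B.mulVec (w : Fin N → ℂ) := by
      simp only [f, LinearMap.restrict_coe_apply, Matrix.mulVecLin_apply]
    have h5 := congrArg Subtype.val hw.apply_eq_smul
    rw [h4] at h5
    simpa using h5
  refine ⟨μ, ?_, ?_⟩
  · refine (Matrix.exists_mulVec_eq_zero_iff).mp ⟨(w : Fin N → ℂ), hw0, ?_⟩
    rw [Matrix.sub_mulVec, Matrix.smul_mulVec, Matrix.one_mulVec, hBw, sub_self]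
  · have h1 : (exp B).mulVec (w : Fin N → ℂ) = Complex.exp μ • (w : Fin N → ℂ) :=
      exp_mulVec_eigen B hBw
    have h2 : (exp B).mulVec (w : Fin N → ℂ) = z • (w : Fin N → ℂ) := (hmemK _).mp w.2
    obtain ⟨i, hi⟩ : ∃ i, (w : Fin N → ℂ) i ≠ 0 := Function.ne_iff.mp hw0
    have h3 := congrFun (h1.symm.trans h2) i
    simp only [Pi.smul_apply, smul_eq_mul] at h3
    exact (mul_right_cancel₀ hi h3).symm

variable {R : Type*} [NormedCommRing R] [NormedAlgebra ℂ R] [CompleteSpace R]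

lemma norm_matrix_map_le (φ : R →ₐ[ℂ] ℂ) (M : Matrix (Fin N) (Fin N) R) :
    ‖M.map φ‖ ≤ ‖M‖ * ‖(1 : R)‖ := by
  have key : ‖M.map φ‖₊ ≤ ‖M‖₊ * ‖(1 : R)‖₊ := by
    rw [Matrix.linfty_opNNNorm_def]
    refine Finset.sup_le fun i _ => ?_
    calc ∑ j, ‖(M.map φ) i j‖₊ = ∑ j, ‖φ (M i j)‖₊ := by rfl
      _ ≤ ∑ j, ‖M i j‖₊ * ‖(1 : R)‖₊ := by
          refine Finset.sum_le_sum fun j _ => ?_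
          exact_mod_cast AlgHom.norm_apply_le_self_mul_norm_one φ (M i j)
      _ = (∑ j, ‖M i j‖₊) * ‖(1 : R)‖₊ := by rw [Finset.sum_mul]
      _ ≤ ‖M‖₊ * ‖(1 : R)‖₊ := by
          refine mul_le_mul_left ?_ _
          rw [Matrix.linfty_opNNNorm_def]
          exact Finset.le_sup (f := fun i => ∑ j, ‖M i j‖₊) (Finset.mem_univ i)
  exact_mod_cast key

lemma continuous_mapMatrix (φ : R →ₐ[ℂ] ℂ) :
    Continuous (φ.mapMatrix : Matrix (Fin N) (Fin N) R →ₐ[ℂ] Matrix (Fin N) (Fin N) ℂ) := by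
  refine AddMonoidHomClass.continuous_of_bound _ ‖(1 : R)‖ fun M => ?_
  rw [mul_comm]
  exact norm_matrix_map_le φ M

lemma map_exp_comm (φ : R →ₐ[ℂ] ℂ) (M : Matrix (Fin N) (Fin N) R) :
    (exp M).map φ = exp (M.map φ) := by
  letI : NormedAlgebra ℚ (Matrix (Fin N) (Fin N) R) := .restrictScalars ℚ ℂ _
  haveI : @CompleteSpace (Matrix (Fin N) (Fin N) R) (inferInstance : NormedRing (Matrix (Fin N) (Fin N) R)).toUniformSpace :=
    inferInstanceAs (CompleteSpace (Matrix (Fin N) (Fin N) R))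
  have h := NormedSpace.map_exp (φ.mapMatrix : Matrix (Fin N) (Fin N) R →ₐ[ℂ] Matrix (Fin N) (Fin N) ℂ) (continuous_mapMatrix φ) M
  simp only [AlgHom.mapMatrix_apply] at h
  exact h

lemma map_sub_smul_one (φ : R →ₐ[ℂ] ℂ) (z : ℂ) (M : Matrix (Fin N) (Fin N) R) :
    (z • (1 : Matrix (Fin N) (Fin N) R) - M).map φ
      = z • (1 : Matrix (Fin N) (Fin N) ℂ) - M.map φ := by
  ext i j
  by_cases h : i = j <;>
    simp [h, Matrix.map_apply, Matrix.sub_apply, Matrix.smul_apply, Matrix.one_apply,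
      map_smul]

end ExpStableAux


set_option maxHeartbeats 2000000 in
/-- Let `R` be a commutative unital complex semisimple Banach algebra and
`A ∈ R^{n×n}` (with the operator norm induced by the action on `Rⁿ` with the
max norm, i.e. the `L∞`-operator norm). Then `A` is exponentially stable,
i.e. `‖e^{tA}‖ ≤ C e^{−εt}` for all `t ≥ 0` and some `C, ε > 0`, iff
`sup {Re λ : λ eigenvalue of Â(φ), φ ∈ M(R)} < 0`. -/
theorem exp_stable_iff_pointwise_spectra_in_left_half_plane
    {R : Type*} [NormedCommRing R] [NormedAlgebra ℂ R] [CompleteSpace R]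
    (hss : ∀ x : R, (∀ φ : R →ₐ[ℂ] ℂ, φ x = 0) → x = 0)
    {n : ℕ} (A : Matrix (Fin n) (Fin n) R) :
    (∃ C > (0 : ℝ), ∃ ε > (0 : ℝ), ∀ t : ℝ, 0 ≤ t →
        ‖NormedSpace.exp (t • A)‖ ≤ C * Real.exp (-ε * t)) ↔
      ∃ δ > (0 : ℝ), ∀ (φ : R →ₐ[ℂ] ℂ) (μ : ℂ),
        Matrix.det (μ • (1 : Matrix (Fin n) (Fin n) ℂ) - A.map φ) = 0 → μ.re ≤ -δ := by
  classical
  letI : NormedAlgebra ℚ (Matrix (Fin n) (Fin n) R) := .restrictScalars ℚ ℂ _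
  haveI : @CompleteSpace (Matrix (Fin n) (Fin n) R) (inferInstance : NormedRing (Matrix (Fin n) (Fin n) R)).toUniformSpace :=
    inferInstanceAs (CompleteSpace (Matrix (Fin n) (Fin n) R))
  have hRsmul : ∀ (r : ℝ), r • A = ((r : ℂ)) • A := by
    intro r
    ext i j
    exact (Complex.coe_smul r (A i j)).symm
  constructor
  · rintro ⟨C, hC, ε, hε, hbound⟩
    refine ⟨ε, hε, ?_⟩
    intro φ μ hdet
    obtain ⟨v, hv0, hv⟩ := (Matrix.exists_mulVec_eq_zero_iff).mpr hdet
    have heig : (A.map φ).mulVec v = μ • v := by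
      rw [Matrix.sub_mulVec, Matrix.smul_mulVec, Matrix.one_mulVec, sub_eq_zero] at hv
      exact hv.symm
    have hv0' : (0 : ℝ) < ‖v‖ := norm_pos_iff.mpr hv0
    have key : ∀ t : ℝ, 0 ≤ t →
        Real.exp (t * μ.re) * ‖v‖ ≤ C * ‖(1 : R)‖ * Real.exp (-ε * t) * ‖v‖ := by
      intro t ht
      have hmape : (NormedSpace.exp (t • A)).map φ
          = NormedSpace.exp (((t : ℂ)) • A.map φ) := by
        rw [hRsmul t, ExpStableAux.map_exp_comm φ]
        congr 1
        ext i j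
        simp only [Matrix.map_apply, Matrix.smul_apply]
        exact φ.toLinearMap.map_smul (t : ℂ) (A i j)
      have heig2 : (((t : ℂ)) • A.map φ).mulVec v = ((t : ℂ) * μ) • v := by
        rw [Matrix.smul_mulVec, heig, smul_smul]
      have hexp2 := ExpStableAux.exp_mulVec_eigen _ heig2
      have hnorm1 : ‖Complex.exp ((t : ℂ) * μ) • v‖ = Real.exp (t * μ.re) * ‖v‖ := by
        rw [norm_smul, Complex.norm_exp]
        congr 2
        simp [Complex.mul_re]
      calc Real.exp (t * μ.re) * ‖v‖ = ‖(NormedSpace.exp (((t : ℂ)) • A.map φ)).mulVec v‖ := by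
            rw [hexp2, hnorm1]
        _ ≤ ‖NormedSpace.exp (((t : ℂ)) • A.map φ)‖ * ‖v‖ :=
            Matrix.linfty_opNorm_mulVec _ _
        _ = ‖(NormedSpace.exp (t • A)).map φ‖ * ‖v‖ := by rw [hmape]
        _ ≤ ‖NormedSpace.exp (t • A)‖ * ‖(1 : R)‖ * ‖v‖ :=
            mul_le_mul_of_nonneg_right (ExpStableAux.norm_matrix_map_le φ _) (norm_nonneg v)
        _ ≤ C * Real.exp (-ε * t) * ‖(1 : R)‖ * ‖v‖ := by
            have h1 := hbound t ht
            have h2 : (0:ℝ) ≤ ‖(1 : R)‖ := norm_nonneg _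
            exact mul_le_mul_of_nonneg_right
              (mul_le_mul_of_nonneg_right h1 h2) (norm_nonneg v)
        _ = C * ‖(1 : R)‖ * Real.exp (-ε * t) * ‖v‖ := by ring
    by_contra hcon
    push_neg at hcon
    set c : ℝ := μ.re + ε with hc
    have hc0 : 0 < c := by simp only [hc]; linarith
    set D : ℝ := C * ‖(1 : R)‖ with hD
    have hD0 : 0 ≤ D := mul_nonneg hC.le (norm_nonneg _)
    set t₀ : ℝ := max 0 (D / c) with ht₀
    have ht₀0 : 0 ≤ t₀ := le_max_left _ _
    have hkey := key t₀ ht₀0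
    have hexp : Real.exp (t₀ * c) ≤ D := by
      have h1 : Real.exp (t₀ * μ.re) ≤ D * Real.exp (-ε * t₀) := by
        have := mul_le_mul_of_nonneg_right hkey (le_of_lt (inv_pos.mpr hv0'))
        rw [mul_inv_cancel_right₀ hv0'.ne', mul_inv_cancel_right₀ hv0'.ne'] at this
        exact this
      have h2 : Real.exp (t₀ * c) = Real.exp (t₀ * μ.re) * Real.exp (ε * t₀) := by
        rw [← Real.exp_add, hc]; ring_nf
      rw [h2]
      calc Real.exp (t₀ * μ.re) * Real.exp (ε * t₀)
          ≤ (D * Real.exp (-ε * t₀)) * Real.exp (ε * t₀) :=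
            mul_le_mul_of_nonneg_right h1 (Real.exp_pos _).le
        _ = D := by rw [mul_assoc, ← Real.exp_add]; ring_nf; simp
    have hge : D < Real.exp (t₀ * c) := by
      have h3 : D ≤ t₀ * c := by
        have : D / c ≤ t₀ := le_max_right _ _
        calc D = (D / c) * c := by field_simp
          _ ≤ t₀ * c := mul_le_mul_of_nonneg_right this hc0.le
      calc D ≤ t₀ * c := h3
        _ < t₀ * c + 1 := by linarith
        _ ≤ Real.exp (t₀ * c) := by linarith [Real.add_one_le_exp (t₀ * c)]
    exact absurd hexp (not_le.mpr hge)
  · rintro ⟨δ, hδ, hφ⟩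
    by_cases htriv : Subsingleton (Matrix (Fin n) (Fin n) R)
    · refine ⟨1, one_pos, 1, one_pos, fun t ht => ?_⟩
      rw [Subsingleton.elim (NormedSpace.exp (t • A)) 0, norm_zero]
      positivity
    · haveI : Nontrivial (Matrix (Fin n) (Fin n) R) := not_subsingleton_iff_nontrivial.mp htriv
      set ε : ℝ := δ / 2 with hε
      have hε0 : 0 < ε := by positivity
      set q : ℝ := Real.exp (-ε) with hq
      have hq0 : 0 < q := Real.exp_pos _
      have hq1 : q < 1 := by
        rw [hq]
        exact Real.exp_lt_one_iff.mpr (by linarith)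
      set E := NormedSpace.exp A with hE
      have hspecE : ∀ z ∈ spectrum ℂ E, ‖z‖₊ < q.toNNReal := by
        intro z hz
        rw [spectrum.mem_iff] at hz
        have h1 : ¬ IsUnit (z • (1 : Matrix (Fin n) (Fin n) R) - E) := by
          rwa [Algebra.algebraMap_eq_smul_one] at hz
        have h2 : ¬ IsUnit ((z • (1 : Matrix (Fin n) (Fin n) R) - E).det) := fun h =>
          h1 ((Matrix.isUnit_iff_isUnit_det _).mpr h)
        obtain ⟨ψ, hψ⟩ := WeakDual.CharacterSpace.exists_apply_eq_zero h2
        set φ : R →ₐ[ℂ] ℂ := WeakDual.CharacterSpace.equivAlgHom ψ with hφdef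
        have hdet0 : (((z • (1 : Matrix (Fin n) (Fin n) R) - E)).map φ).det = 0 := by
          have h3 := RingHom.map_det (φ : R →+* ℂ) (z • (1 : Matrix (Fin n) (Fin n) R) - E)
          rw [RingHom.mapMatrix_apply] at h3
          rw [show ((z • (1 : Matrix (Fin n) (Fin n) R) - E)).map ⇑φ
              = ((z • (1 : Matrix (Fin n) (Fin n) R) - E)).map ⇑(φ : R →+* ℂ) from rfl, ← h3]
          exact hψ
        rw [ExpStableAux.map_sub_smul_one, hE, ExpStableAux.map_exp_comm] at hdet0
        obtain ⟨μ, hμdet, rfl⟩ := ExpStableAux.exists_eigen_exp (A.map φ) hdet0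
        have hre := hφ φ μ hμdet
        have hnorm : ‖Complex.exp μ‖ = Real.exp μ.re := by
          rw [Complex.norm_exp]
        rw [← NNReal.coe_lt_coe, coe_nnnorm, Real.coe_toNNReal _ hq0.le, hnorm]
        calc Real.exp μ.re ≤ Real.exp (-δ) := Real.exp_le_exp.mpr hre
          _ < q := by
              rw [hq]
              exact Real.exp_lt_exp.mpr (by rw [hε]; linarith)
      have hsr : spectralRadius ℂ E < (q.toNNReal : ℝ≥0∞) := by
        exact_mod_cast spectrum.spectralRadius_lt_of_forall_lt E hspecE
      have htend := spectrum.pow_nnnorm_pow_one_div_tendsto_nhds_spectralRadius E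
      have hev : ∀ᶠ k : ℕ in Filter.atTop,
          (‖E ^ k‖₊ : ℝ≥0∞) ^ (1 / (k : ℝ)) < (q.toNNReal : ℝ≥0∞) :=
        htend.eventually_lt_const hsr
      obtain ⟨k, hkE, hk1⟩ := (hev.and (Filter.eventually_ge_atTop 1)).exists
      have hk0 : ((k : ℝ)) ≠ 0 := by
        have : (1:ℕ) ≤ k := hk1
        positivity
      have hEk : ‖E ^ k‖ < q ^ k := by
        have step : (‖E ^ k‖₊ : ℝ≥0∞) < (q.toNNReal : ℝ≥0∞) ^ k := by
          calc (‖E ^ k‖₊ : ℝ≥0∞) = ((‖E ^ k‖₊ : ℝ≥0∞) ^ (1 / (k : ℝ))) ^ (k : ℕ) := by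
                rw [← ENNReal.rpow_natCast _ k, ← ENNReal.rpow_mul, one_div,
                  inv_mul_cancel₀ hk0, ENNReal.rpow_one]
            _ < (q.toNNReal : ℝ≥0∞) ^ (k : ℕ) :=
                ENNReal.pow_lt_pow_left (by omega) hkE
        have step2 : ‖E ^ k‖₊ < q.toNNReal ^ k := by
          exact_mod_cast step
        have := (NNReal.coe_lt_coe.mpr step2)
        rwa [coe_nnnorm, NNReal.coe_pow, Real.coe_toNNReal _ hq0.le] at this
      obtain ⟨Msup, hMsup⟩ := (isCompact_Icc (a := (0:ℝ)) (b := (k:ℝ))).exists_bound_of_continuousOn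
        (f := fun s : ℝ => NormedSpace.exp (((s : ℂ)) • A))
        ((NormedSpace.exp_continuous.comp
          ((Complex.continuous_ofReal).smul continuous_const)).continuousOn)
      have hMsup0 : 0 ≤ Msup := by
        have := hMsup 0 ⟨le_refl 0, by positivity⟩
        exact le_trans (norm_nonneg _) this
      refine ⟨(Msup + 1) * Real.exp (ε * k), by positivity, ε, hε0, ?_⟩
      intro t ht
      set m : ℕ := Nat.floor (t / (k : ℝ)) with hm
      have hkpos : (0:ℝ) < k := by
        have : (1:ℕ) ≤ k := hk1
        exact_mod_cast Nat.lt_of_lt_of_le Nat.zero_lt_one this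
      have hmk : (m : ℝ) * k ≤ t := by
        have h1 : (m : ℝ) ≤ t / k := Nat.floor_le (div_nonneg ht hkpos.le)
        calc (m : ℝ) * k ≤ (t / k) * k := mul_le_mul_of_nonneg_right h1 hkpos.le
          _ = t := div_mul_cancel₀ t hkpos.ne'
      have hts : t - m * k < k := by
        have h1 : t / k < m + 1 := Nat.lt_floor_add_one (t / (k:ℝ))
        have h2 : t < (m + 1) * k := by
          rw [← div_lt_iff₀ hkpos] at *
          linarith [h1]
        linarith
      set s : ℝ := t - m * k with hs
      have hs0 : 0 ≤ s := by simp only [hs]; linarith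
      have hsk : s ≤ k := hts.le
      have hdecomp : NormedSpace.exp (t • A)
          = NormedSpace.exp (((s : ℂ)) • A) * (E ^ k) ^ m := by
        rw [hRsmul t]
        have h1 : ((t : ℂ)) • A = ((s : ℂ)) • A + ((m * k : ℕ) : ℂ) • A := by
          rw [← add_smul]
          congr 1
          simp only [hs]
          push_cast
          ring
        rw [h1]
        erw [NormedSpace.exp_add_of_commute (((Commute.refl A).smul_left (s : ℂ)).smul_right ((m * k : ℕ) : ℂ))]
        congr 1
        rw [Nat.cast_smul_eq_nsmul]
        erw [NormedSpace.exp_nsmul]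
        erw [← hE]
        rw [mul_comm m k, pow_mul]
      rcases Nat.eq_zero_or_pos m with hm0 | hm1
      · rw [hdecomp, hm0, pow_zero, mul_one]
        have h1 : ‖NormedSpace.exp (((s : ℂ)) • A)‖ ≤ Msup :=
          hMsup s ⟨hs0, hsk⟩
        have h2 : Real.exp (ε * k) * Real.exp (-ε * t) = Real.exp (ε * k - ε * t) := by
          rw [← Real.exp_add]; ring_nf
        have h3 : (1:ℝ) ≤ Real.exp (ε * k - ε * t) := by
          rw [Real.one_le_exp_iff]
          have h4 : t - (m:ℝ) * k < k := hts
          rw [hm0] at h4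
          push_cast at h4
          nlinarith
        calc ‖NormedSpace.exp (((s : ℂ)) • A)‖ ≤ Msup := h1
          _ ≤ (Msup + 1) * (Real.exp (ε * k) * Real.exp (-ε * t)) := by
              rw [h2]; nlinarith
          _ = (Msup + 1) * Real.exp (ε * k) * Real.exp (-ε * t) := by ring
      · have hnormpow : ‖(E ^ k) ^ m‖ ≤ ‖E ^ k‖ ^ m := norm_pow_le' _ hm1
        have hEknn : (0:ℝ) ≤ ‖E ^ k‖ := norm_nonneg _
        have hpow2 : ‖E ^ k‖ ^ m ≤ (q ^ k) ^ m :=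
          pow_le_pow_left₀ hEknn hEk.le m
        have hqkm : ((q:ℝ) ^ k) ^ m = Real.exp (-ε * ((k:ℝ) * m)) := by
          rw [← pow_mul, hq, ← Real.exp_nat_mul]
          congr 1
          push_cast
          ring
        have hmono : Real.exp (-ε * ((k:ℝ) * m)) ≤ Real.exp (ε * k) * Real.exp (-ε * t) := by
          rw [← Real.exp_add, Real.exp_le_exp]
          have : t - k ≤ (k : ℝ) * m := by nlinarith [hts]
          nlinarith
        calc ‖NormedSpace.exp (t • A)‖
            = ‖NormedSpace.exp (((s : ℂ)) • A) * (E ^ k) ^ m‖ := by rw [hdecomp]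
          _ ≤ ‖NormedSpace.exp (((s : ℂ)) • A)‖ * ‖(E ^ k) ^ m‖ := norm_mul_le _ _
          _ ≤ Msup * (q ^ k) ^ m := by
              exact mul_le_mul (hMsup s ⟨hs0, hsk⟩) (hnormpow.trans hpow2)
                (norm_nonneg _) hMsup0
          _ = Msup * Real.exp (-ε * ((k:ℝ) * m)) := by rw [hqkm]
          _ ≤ Msup * (Real.exp (ε * k) * Real.exp (-ε * t)) :=
              mul_le_mul_of_nonneg_left hmono hMsup0
          _ ≤ (Msup + 1) * (Real.exp (ε * k) * Real.exp (-ε * t)) := by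
              have hp : (0:ℝ) < Real.exp (ε * k) * Real.exp (-ε * t) := by positivity
              nlinarith
          _ = (Msup + 1) * Real.exp (ε * k) * Real.exp (-ε * t) := by ring
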